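/- Let r be a positive real number, S_0 = κ^{-1}·[[1,√r],[√r,-1]] for some nonzero complex κ with S_0² = 1, and for a real φ let U_φ = [[e^{iφ},0],[0,1]]. Set 𝒮 = U_φ S_0 U_φ†. If the Verlinde coefficient N_{11}^0 = Σ_l 𝒮_{1l}𝒮_{1l}(𝒮^{-1})_{0l}/𝒮_{0l} is a real number, then e^{-2iφ} is real, i.e. φ ∈ {0, π} modulo π. -/

import Mathlib

open Matrix Complex

/-- If `𝒮 = U_φ S₀ U_φ†` with `S₀ = κ⁻¹ [[1,√r],[√r,-1]]`, `S₀² = 1`, and the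
Verlinde coefficient `N₁₁⁰` is a real number, then `e^{-2iφ}` is real. -/
theorem stmt_7 (r : ℝ) (hr : 0 < r) (κ : ℂ) (hκ : κ ≠ 0)
    (S₀ : Matrix (Fin 2) (Fin 2) ℂ)
    (hS₀ : S₀ = κ⁻¹ • !![1, ((Real.sqrt r : ℝ) : ℂ); ((Real.sqrt r : ℝ) : ℂ), -1])
    (hS₀sq : S₀ ^ 2 = 1)
    (φ : ℝ) (U : Matrix (Fin 2) (Fin 2) ℂ)
    (hU : U = !![Complex.exp (φ * Complex.I), 0; 0, 1])
    (calS : Matrix (Fin 2) (Fin 2) ℂ) (hcalS : calS = U * S₀ * Uᴴ)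
    (hreal : ∃ x : ℝ, (∑ l : Fin 2, calS 1 l * calS 1 l * calS⁻¹ 0 l / calS 0 l) = (x : ℂ)) :
    ∃ y : ℝ, Complex.exp (-(2 * φ) * Complex.I) = (y : ℂ) := by
  obtain ⟨x, hx⟩ := hreal
  set s : ℂ := ((Real.sqrt r : ℝ) : ℂ) with hs
  have hs2 : s * s = (r : ℂ) := by
    rw [hs]; norm_cast; exact Real.mul_self_sqrt hr.le
  have hsne : s ≠ 0 := by
    rw [hs]; norm_cast
    exact ne_of_gt (Real.sqrt_pos.mpr hr)
  set e : ℂ := Complex.exp (φ * Complex.I) with he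
  set e' : ℂ := Complex.exp (-(φ * Complex.I)) with he'
  have hee' : e * e' = 1 := by
    rw [he, he', ← Complex.exp_add]; simp
  have hene : e ≠ 0 := Complex.exp_ne_zero _
  have he'ne : e' ≠ 0 := Complex.exp_ne_zero _
  have hE : e' * e' = Complex.exp (-(2 * φ) * Complex.I) := by
    rw [he', ← Complex.exp_add]; ring_nf
  have hconj : (starRingEnd ℂ) e = e' := by
    rw [he, he', ← Complex.exp_conj, _root_.map_mul, Complex.conj_ofReal, Complex.conj_I]
    ring_nf
  have hUH : Uᴴ = !![e', 0; 0, 1] := by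
    rw [hU]
    ext i j
    fin_cases i <;> fin_cases j <;>
      simp [Matrix.conjTranspose_apply, hconj]
  -- explicit form of calS
  have hcal : calS = κ⁻¹ • !![1, s * e; s * e', -1] := by
    rw [hcalS, hUH, hS₀, hU, Matrix.mul_smul, Matrix.smul_mul, Matrix.mul_fin_two,
      Matrix.mul_fin_two]
    congr 1
    ext i j
    fin_cases i <;> fin_cases j <;> simp <;> ring_nf
    · rw [mul_comm e e'] at hee' ⊢; rw [hee']
  -- κ relation
  have hκr : κ⁻¹ * κ⁻¹ * (1 + r) = 1 := by
    have h00 := congrFun (congrFun hS₀sq 0) 0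
    simp [hS₀, pow_two, Matrix.mul_apply, Fin.sum_univ_two, Matrix.smul_apply] at h00
    linear_combination h00 - κ⁻¹ * κ⁻¹ * hs2
  have hκinv : κ⁻¹ ≠ 0 := inv_ne_zero hκ
  -- calS is involutive
  have hsq : calS * calS = 1 := by
    rw [hcal]
    ext i j
    fin_cases i <;> fin_cases j <;>
      simp [Matrix.mul_apply, Fin.sum_univ_two, Matrix.one_apply]
    · linear_combination hκr + κ⁻¹ * κ⁻¹ * s * s * hee' + κ⁻¹ * κ⁻¹ * hs2
    · ring
    · ring
    · linear_combination hκr + κ⁻¹ * κ⁻¹ * s * s * hee' + κ⁻¹ * κ⁻¹ * hs2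
  have hinv : calS⁻¹ = calS := Matrix.inv_eq_right_inv hsq
  rw [hinv, Fin.sum_univ_two, hcal] at hx
  simp [Matrix.smul_apply] at hx
  have hA : κ⁻¹ * (s * e') * (κ⁻¹ * (s * e')) * κ⁻¹ * κ
      = κ⁻¹ * κ⁻¹ * ((r : ℂ) * Complex.exp (-(2 * φ) * Complex.I)) := by
    rw [← hE, ← hs2]
    field_simp
  have hB : κ⁻¹ * κ⁻¹ * (κ⁻¹ * (s * e)) / (κ⁻¹ * (s * e)) = κ⁻¹ * κ⁻¹ := by
    rw [mul_div_assoc, div_self (mul_ne_zero hκinv (mul_ne_zero hsne hene)), mul_one]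
  rw [hA, hB] at hx
  refine ⟨((1 + r) * x - 1) / r, ?_⟩
  have hr' : (r : ℂ) ≠ 0 := by exact_mod_cast hr.ne'
  push_cast
  rw [eq_div_iff hr']
  linear_combination (1 + (r : ℂ)) * hx
    - ((r : ℂ) * Complex.exp (-(2 * (φ : ℂ)) * Complex.I) + 1) * hκr
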